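/- Assume g(a, b) = ⟨L₀ a, L₀ b⟩ for all a, b ∈ ker λ. Let u₀ ∈ ker λ be the g-orthogonal projection of u onto ker λ, i.e. the unique u₀ ∈ ker λ with g(u − u₀, a) = 0 for all a ∈ ker λ, and let P := L₀(ker λ). For v ∈ ℝⁿ, define L := L₀ + (v − L₀(u)) ⊗ λ. Then L is g-isometric (g(w₁, w₂) = ⟨L w₁, L w₂⟩ for all w₁, w₂ ∈ ℝ^m) if and only if v = L₀(u₀) + τ for some τ ∈ ℝⁿ orthogonal to P with ‖τ‖² = g(u, u) − g(u₀, u₀). -/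

import Mathlib

open scoped RealInnerProductSpace

/-- Characterization of formal solutions of the isometric relation over a map which is
isometric in the hyperplane directions `ker λ`: with `g` an inner product on `ℝ^m`,
`λ(u) = 1`, `u₀` the `g`-orthogonal projection of `u` onto `ker λ`, `L₀` isometric on
`ker λ`, and `L = L₀ + (v − L₀(u)) ⊗ λ`, the map `L` is `g`-isometric if and only if
`v = L₀(u₀) + τ` with `τ` orthogonal to `P = L₀(ker λ)` and
`‖τ‖² = g(u,u) − g(u₀,u₀)`. -/
theorem formal_solution_isometric_iff {m n : ℕ}
    (g : EuclideanSpace ℝ (Fin m) →ₗ[ℝ] EuclideanSpace ℝ (Fin m) →ₗ[ℝ] ℝ)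
    (hg_symm : ∀ a b, g a b = g b a)
    (hg_pos : ∀ a, a ≠ 0 → 0 < g a a)
    (lam : EuclideanSpace ℝ (Fin m) →ₗ[ℝ] ℝ) (hlam : lam ≠ 0)
    (u : EuclideanSpace ℝ (Fin m)) (hu : lam u = 1)
    (u₀ : EuclideanSpace ℝ (Fin m)) (hu₀ : lam u₀ = 0)
    (hu₀_proj : ∀ a, lam a = 0 → g (u - u₀) a = 0)
    (L₀ : EuclideanSpace ℝ (Fin m) →ₗ[ℝ] EuclideanSpace ℝ (Fin n))
    (hiso₀ : ∀ a b, lam a = 0 → lam b = 0 → g a b = ⟪L₀ a, L₀ b⟫)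
    (v : EuclideanSpace ℝ (Fin n)) :
    (∀ w₁ w₂ : EuclideanSpace ℝ (Fin m),
        g w₁ w₂ = ⟪L₀ w₁ + lam w₁ • (v - L₀ u), L₀ w₂ + lam w₂ • (v - L₀ u)⟫)
      ↔ (∃ τ : EuclideanSpace ℝ (Fin n),
          (∀ a : EuclideanSpace ℝ (Fin m), lam a = 0 → ⟪τ, L₀ a⟫ = 0) ∧
          ‖τ‖ ^ 2 = g u u - g u₀ u₀ ∧ v = L₀ u₀ + τ) := by
  constructor
  · intro hiso
    have hgsub : ∀ a, lam a = 0 → g u a = g u₀ a := by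
      intro a ha
      have := hu₀_proj a ha
      have h := this
      simp only [map_sub, LinearMap.sub_apply] at h
      linarith
    have hva : ∀ a, lam a = 0 → ⟪v, L₀ a⟫ = g u a := by
      intro a ha
      have h := hiso u a
      simp only [hu, ha, one_smul, zero_smul, add_zero] at h
      have h2 : L₀ u + (v - L₀ u) = v := by abel
      rw [h2] at h
      exact h.symm
    have hvv : ⟪v, v⟫ = g u u := by
      have h := hiso u u
      simp only [hu, one_smul] at h
      have h2 : L₀ u + (v - L₀ u) = v := by abel
      rw [h2] at h
      exact h.symm
    refine ⟨v - L₀ u₀, ?_, ?_, by abel⟩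
    · intro a ha
      rw [inner_sub_left]
      have h1 := hva a ha
      have h2 := hiso₀ u₀ a hu₀ ha
      have h3 := hgsub a ha
      linarith
    · have hexp : ⟪v - L₀ u₀, v - L₀ u₀⟫ =
          ⟪v, v⟫ - 2 * ⟪v, L₀ u₀⟫ + ⟪L₀ u₀, L₀ u₀⟫ := by
        simp only [inner_sub_left, inner_sub_right, real_inner_comm (L₀ u₀) v]
        ring
      have h1 := hva u₀ hu₀
      have h2 := hiso₀ u₀ u₀ hu₀ hu₀
      have h3 := hgsub u₀ hu₀
      have h4 : g u u₀ = g u₀ u := hg_symm u u₀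
      rw [← real_inner_self_eq_norm_sq, hexp]
      linarith
  · rintro ⟨τ, hτP, hτn, rfl⟩
    have hτu₀ : ⟪L₀ u₀, τ⟫ = 0 := by
      rw [real_inner_comm]; exact hτP u₀ hu₀
    have hvv : ⟪(L₀ u₀ + τ : EuclideanSpace ℝ (Fin n)), L₀ u₀ + τ⟫ = g u u := by
      simp only [inner_add_left, inner_add_right]
      rw [real_inner_comm τ (L₀ u₀)]
      have h2 := hiso₀ u₀ u₀ hu₀ hu₀
      have h3 := real_inner_self_eq_norm_sq τ
      linarith [hτn, hτu₀, real_inner_comm τ (L₀ u₀)]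
    have hva : ∀ a, lam a = 0 → ⟪(L₀ u₀ + τ : EuclideanSpace ℝ (Fin n)), L₀ a⟫ = g u a := by
      intro a ha
      rw [inner_add_left, hτP a ha, add_zero, ← hiso₀ u₀ a hu₀ ha]
      have h := hu₀_proj a ha
      simp only [map_sub, LinearMap.sub_apply] at h
      linarith
    intro w₁ w₂
    set s : EuclideanSpace ℝ (Fin n) := L₀ u₀ + τ with hs
    set t₁ := lam w₁ with ht₁
    set t₂ := lam w₂ with ht₂
    set a₁ : EuclideanSpace ℝ (Fin m) := w₁ - t₁ • u with ha₁
    set a₂ : EuclideanSpace ℝ (Fin m) := w₂ - t₂ • u with ha₂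
    have hla₁ : lam a₁ = 0 := by simp [ha₁, hu, ht₁]
    have hla₂ : lam a₂ = 0 := by simp [ha₂, hu, ht₂]
    have hw₁ : w₁ = a₁ + t₁ • u := by rw [ha₁]; abel
    have hw₂ : w₂ = a₂ + t₂ • u := by rw [ha₂]; abel
    have hL₁ : L₀ w₁ + t₁ • (s - L₀ u) = L₀ a₁ + t₁ • s := by
      rw [ha₁, map_sub, map_smul, smul_sub]; abel
    have hL₂ : L₀ w₂ + t₂ • (s - L₀ u) = L₀ a₂ + t₂ • s := by
      rw [ha₂, map_sub, map_smul, smul_sub]; abel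
    rw [hL₁, hL₂]
    have hLHS : g w₁ w₂ = g a₁ a₂ + t₂ * g a₁ u + t₁ * g u a₂ + t₁ * t₂ * g u u := by
      rw [hw₁, hw₂]
      simp only [map_add, map_smul, LinearMap.add_apply, LinearMap.smul_apply, smul_eq_mul]
      ring
    rw [hLHS]
    simp only [inner_add_left, inner_add_right, real_inner_smul_left, real_inner_smul_right]
    rw [← hiso₀ a₁ a₂ hla₁ hla₂, hvv, hva a₂ hla₂]
    have hsa₁ : ⟪L₀ a₁, s⟫ = g u a₁ := by rw [real_inner_comm]; exact hva a₁ hla₁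
    rw [hsa₁, hg_symm u a₁]
    ring
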